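/- Let n and r be positive integers with n > r ≥ 2 and r even. Every n-element rank-r matroid with no U_{3,4}-minor has at most binom(2n/r, 2)^{r/2} bases. -/

import Mathlib

open Matroid Set Filter

variable {α : Type*}

/-- The number of bases of a matroid. -/
noncomputable def Matroid.numBases (M : Matroid α) : ℕ := {B : Set α | M.IsBase B}.ncard

/-- Deletion of a set of elements from a matroid. -/
def Matroid.del (M : Matroid α) (D : Set α) : Matroid α := M ↾ (M.E \ D)

/-- Contraction of a set of elements in a matroid, defined by duality. -/
def Matroid.con (M : Matroid α) (C : Set α) : Matroid α := (M✶ ↾ (M✶.E \ C))✶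

/-- `N` is a minor of `M`: it is obtained by contracting a set `C` and deleting a set `D`. -/
def Matroid.IsMinorOf (N M : Matroid α) : Prop :=
  ∃ C D : Set α, C ⊆ M.E ∧ D ⊆ M.E ∧ Disjoint C D ∧ N = (M.con C).del D

/-- `M` is (a copy of) the uniform matroid `U_{s,t}`: it has `t` elements and its bases are
exactly the `s`-element subsets of the ground set. -/
def Matroid.IsUnif (M : Matroid α) (s t : ℕ) : Prop :=
  M.E.Finite ∧ M.E.ncard = t ∧ ∀ B, M.IsBase B ↔ B ⊆ M.E ∧ B.ncard = s

/-- `M` has a minor isomorphic to the uniform matroid `U_{s,t}`. -/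
def Matroid.HasUnifMinor (M : Matroid α) (s t : ℕ) : Prop :=
  ∃ N : Matroid α, N.IsMinorOf M ∧ N.IsUnif s t

/-- `M` has a restriction isomorphic to the uniform matroid `U_{s,t}`. -/
def Matroid.HasUnifRestriction (M : Matroid α) (s t : ℕ) : Prop :=
  ∃ X ⊆ M.E, (M ↾ X).IsUnif s t

/-- `M` has rank `r`. -/
def Matroid.RankEq (M : Matroid α) (r : ℕ) : Prop := ∃ B, M.IsBase B ∧ B.ncard = r

/-- `M` is a simple matroid: every single element and every pair of distinct elements
of the ground set is independent. -/
def Matroid.IsSimple (M : Matroid α) : Prop :=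
  (∀ e ∈ M.E, M.Indep {e}) ∧ ∀ e ∈ M.E, ∀ f ∈ M.E, e ≠ f → M.Indep {e, f}

namespace Matroid

variable {M : Matroid α} {I J R X S T B : Set α} {e f g x y : α}

@[simp] lemma con_ground (M : Matroid α) (C : Set α) : (M.con C).E = M.E \ C := by
  simp [Matroid.con]

lemma con_empty (M : Matroid α) : M.con ∅ = M := by
  rw [Matroid.con, diff_empty, restrict_ground_eq_self, dual_dual]

lemma con_indep_iff (hR : M.Indep R) :
    (M.con R).Indep J ↔ Disjoint J R ∧ M.Indep (J ∪ R) := by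
  have hRE : R ⊆ M.E := hR.subset_ground
  have hX : M✶.E \ R = M.E \ R := by rw [dual_ground]
  rw [Matroid.con, dual_indep_iff_exists', restrict_ground_eq, hX]
  constructor
  · rintro ⟨hJX, Y, hY, hJY⟩
    rw [isBase_restrict_iff'] at hY
    obtain ⟨⟨hYi, hYX⟩, hYmax⟩ := hY
    obtain ⟨B, hB, hBY⟩ := Matroid.Coindep.exists_isBase_subset_compl hYi
    obtain ⟨B', hB', hRB', hB'sub⟩ := hR.exists_isBase_subset_union_isBase hB
    have hB'Y : B' ⊆ M.E \ Y := by
      refine hB'sub.trans (union_subset (fun r hr => ⟨hRE hr, fun hrY => ?_⟩) hBY)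
      exact (hYX hrY).2 hr
    have hJB' : J ⊆ B' := by
      intro j hj
      by_contra hjB'
      have hco : M✶.Indep (insert j Y) := by
        rw [← coindep_def, coindep_iff_exists]
        refine ⟨B', hB', fun b hb => ⟨(hB'Y hb).1, ?_⟩⟩
        rintro (rfl | hbY)
        · exact hjB' hb
        · exact (hB'Y hb).2 hbY
      have hsub : insert j Y ⊆ M.E \ R := insert_subset (hJX hj) hYX
      have := hYmax ⟨hco, hsub⟩ (subset_insert _ _)
      exact (hJY.ne_of_mem hj (this (mem_insert _ _))) rfl
    exact ⟨disjoint_sdiff_left.mono_left hJX, hB'.indep.subset (union_subset hJB' hRB')⟩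
  · rintro ⟨hdisj, hind⟩
    obtain ⟨B, hB, hJRB⟩ := hind.exists_isBase_superset
    have hJB : J ⊆ B := subset_union_left.trans hJRB
    have hRB : R ⊆ B := subset_union_right.trans hJRB
    have hJX : J ⊆ M.E \ R := subset_diff.2 ⟨hJB.trans hB.subset_ground, hdisj⟩
    refine ⟨hJX, ((M.E \ R) \ B), ?_, ((disjoint_sdiff_right : Disjoint B ((M.E \ R) \ B)).mono_left hJB)⟩
    rw [isBase_restrict_iff']
    refine ⟨⟨?_, diff_subset⟩, ?_⟩
    · rw [← coindep_def, coindep_iff_exists (diff_subset.trans diff_subset)]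
      exact ⟨B, hB, fun b hb => ⟨hB.subset_ground hb, fun h => h.2 hb⟩⟩
    · rintro T ⟨hTi, hTX⟩ hYT t ht
      obtain ⟨B₂, hB₂, hB₂T⟩ := Matroid.Coindep.exists_isBase_subset_compl hTi
      have hB₂B : B₂ ⊆ B := by
        intro b hb
        by_contra hbB
        have hbE : b ∈ M.E := hB₂.subset_ground hb
        have hbR : b ∉ R := fun hbR => hbB (hRB hbR)
        exact (hB₂T hb).2 (hYT ⟨⟨hbE, hbR⟩, hbB⟩)
      obtain rfl := hB₂.eq_of_subset_isBase hB hB₂B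
      exact ⟨hTX ht, fun htB => (hB₂T htB).2 ht⟩

lemma restrict_isMinorOf (hX : X ⊆ M.E) : (M ↾ X).IsMinorOf M := by
  refine ⟨∅, M.E \ X, empty_subset _, diff_subset, disjoint_sdiff_right.mono_left (empty_subset _), ?_⟩
  rw [con_empty, Matroid.del, diff_diff_cancel_left hX]

lemma con_restrict_isMinorOf (hR : R ⊆ M.E) (hS : S ⊆ M.E \ R) :
    ((M.con R) ↾ S).IsMinorOf M := by
  refine ⟨R, (M.E \ R) \ S, hR, diff_subset.trans diff_subset,
    (disjoint_sdiff_left (t := M.E) (s := R)).symm.mono_right diff_subset, ?_⟩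
  rw [Matroid.del, con_ground, diff_diff_cancel_left hS]



lemma clcard (hJ : M.Indep J) (hI : M.Indep I) (hIJ : I ⊆ M.closure J) :
    I.encard ≤ J.encard := by
  obtain ⟨I', hI'b, hII'⟩ := hI.subset_isBasis_of_subset hIJ (M.closure_subset_ground J)
  have h1 := hI'b.isBase_restrict
  have h2 := (hJ.isBasis_closure).isBase_restrict
  rw [← h1.encard_eq_encard_of_isBase h2]
  exact encard_mono hII'

lemma clcard_ncard (hJ : M.Indep J) (hI : M.Indep I) (hIJ : I ⊆ M.closure J)
    (hJfin : J.Finite) : I.ncard ≤ J.ncard := by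
  rw [Set.ncard_def, Set.ncard_def]
  exact ENat.toNat_le_toNat (clcard hJ hI hIJ) hJfin.encard_lt_top.ne

lemma isUnif_restrict {M' : Matroid α} (hS : S ⊆ M'.E) (hfin : S.Finite) (h4 : S.ncard = 4)
    (hind : ∀ T ⊆ S, (M'.Indep T ↔ T ≠ S)) : (M' ↾ S).IsUnif 3 4 := by
  refine ⟨hfin, by simpa, fun B => ?_⟩
  rw [restrict_ground_eq, isBase_restrict_iff']
  constructor
  · rintro ⟨⟨hBi, hBS⟩, hmax⟩
    have hBne : B ≠ S := (hind B hBS).1 hBi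
    have hBS' : B ⊂ S := hBS.ssubset_of_ne hBne
    have hlt : B.ncard < 4 := h4 ▸ ncard_lt_ncard hBS' hfin
    refine ⟨hBS, ?_⟩
    by_contra h3
    have hge : 2 ≤ (S \ B).ncard := by
      rw [ncard_diff hBS'.subset (hfin.subset hBS'.subset), h4]
      omega
    obtain ⟨a, b, ha, hb, hab⟩ := one_lt_ncard_iff (hfin.diff) |>.1 hge
    have hTi : M'.Indep (insert a B) := by
      refine (hind _ (insert_subset ha.1 hBS)).2 fun hcon => ?_
      have : b ∈ insert a B := hcon ▸ hb.1
      rcases this with rfl | hbB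
      · exact hab rfl
      · exact hb.2 hbB
    have := hmax ⟨hTi, insert_subset ha.1 hBS⟩ (subset_insert _ _) (mem_insert a B)
    exact ha.2 this
  · rintro ⟨hBS, h3⟩
    have hBne : B ≠ S := by rintro rfl; omega
    refine ⟨⟨(hind B hBS).2 hBne, hBS⟩, ?_⟩
    rintro T ⟨hTi, hTS⟩ hBT
    have hTne := (hind T hTS).1 hTi
    have hT3 : T.ncard < 4 := h4 ▸ ncard_lt_ncard (hTS.ssubset_of_ne hTne) hfin
    rw [eq_of_subset_of_ncard_le hBT (by omega) (hfin.subset hTS)]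

lemma hasUnifMinor_of_circuit (hI : M.Indep I) (hIfin : I.Finite) (heI : e ∉ I)
    (hecl : e ∈ M.closure I) (hmin : ∀ i ∈ I, e ∉ M.closure (I \ {i})) (h3 : 3 ≤ I.ncard) :
    M.HasUnifMinor 3 4 := by
  have heE : e ∈ M.E := M.closure_subset_ground I hecl
  -- pick distinct u v w ∈ I
  obtain ⟨u, hu⟩ : I.Nonempty := (ncard_pos hIfin).1 (by omega)
  obtain ⟨v, hv⟩ : (I \ {u}).Nonempty := by
    rw [← ncard_pos (hIfin.diff), ncard_diff_singleton_of_mem hu]; omega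
  obtain ⟨w, hw⟩ : ((I \ {u}) \ {v}).Nonempty := by
    rw [← ncard_pos ((hIfin.diff).diff), ncard_diff_singleton_of_mem hv,
      ncard_diff_singleton_of_mem hu]
    omega
  have hvI : v ∈ I := hv.1
  have hwI : w ∈ I := hw.1.1
  have huv : u ≠ v := fun h => hv.2 h.symm
  have huw : u ≠ w := fun h => hw.1.2 h.symm
  have hvw : v ≠ w := fun h => hw.2 h.symm
  set R : Set α := I \ {u, v, w} with hR_def
  set S : Set α := insert e {u, v, w} with hS_def
  have hR : M.Indep R := hI.subset diff_subset
  have hRE : R ⊆ M.E := hR.subset_ground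
  have hSE : S ⊆ M.E \ R := by
    rintro a (rfl | ha)
    · exact ⟨heE, fun h => heI h.1⟩
    · refine ⟨hI.subset_ground (by rcases ha with rfl | rfl | rfl <;> assumption), ?_⟩
      exact fun h => h.2 ha
  have hins : ∀ a ∈ I, M.Indep (insert e (I \ {a})) := by
    intro a ha
    rw [(hI.subset diff_subset).insert_indep_iff_of_notMem (fun h => heI h.1)]
    exact ⟨heE, hmin a ha⟩
  have hSR : S ∪ R = insert e I := by
    rw [hS_def, hR_def, insert_union, union_diff_cancel (by
      rintro a (rfl | rfl | rfl) <;> assumption)]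
  have key : ∀ T ⊆ S, ((M.con R).Indep T ↔ T ≠ S) := by
    intro T hTS
    rw [con_indep_iff hR]
    constructor
    · rintro ⟨-, hTR⟩ rfl
      rw [hSR] at hTR
      exact (hI.insert_dep_iff.2 ⟨hecl, heI⟩).not_indep hTR
    · intro hTne
      have hdisj : Disjoint T S.compl → True := fun _ => trivial
      refine ⟨Disjoint.mono_left hTS ?_, ?_⟩
      · rw [disjoint_left]
        rintro a (rfl | ha) haR
        · exact heI haR.1
        · exact haR.2 ha
      · obtain ⟨s, hsS, hsT⟩ := exists_of_ssubset (hTS.ssubset_of_ne hTne)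
        have hTsub : T ⊆ S \ {s} := fun a haT => ⟨hTS haT, fun h => hsT (h ▸ haT)⟩
        rcases hsS with rfl | hs
        · -- s = e : T ∪ R ⊆ I
          refine hI.subset (union_subset (fun a haT => ?_) diff_subset)
          rcases (hTsub haT).1 with rfl | ha
          · exact absurd rfl (hTsub haT).2
          · rcases ha with rfl | rfl | rfl <;> assumption
        · -- s ∈ {u,v,w} : T ∪ R ⊆ insert e (I \ {s})
          have hsI : s ∈ I := by rcases hs with rfl | rfl | rfl <;> assumption
          refine (hins s hsI).subset (union_subset (fun a haT => ?_) (fun a haR => ?_))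
          · rcases (hTsub haT).1 with rfl | ha
            · exact mem_insert _ _
            · exact mem_insert_of_mem _ ⟨by rcases ha with rfl | rfl | rfl <;> assumption,
                (hTsub haT).2⟩
          · exact mem_insert_of_mem _ ⟨haR.1, fun h => haR.2 (h ▸ hs)⟩
  have hSfin : S.Finite := (finite_singleton w).insert v |>.insert u |>.insert e
  have hS4 : S.ncard = 4 := by
    have heuvw : e ∉ ({u, v, w} : Set α) := by
      rintro (rfl | rfl | rfl) <;> exact heI (by assumption)
    have huvw : u ∉ ({v, w} : Set α) := by rintro (rfl | rfl) <;> simp_all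
    rw [hS_def, ncard_insert_of_notMem heuvw ((finite_singleton w).insert v |>.insert u),
      ncard_insert_of_notMem huvw ((finite_singleton w).insert v), ncard_pair hvw]
  refine ⟨(M.con R) ↾ S, con_restrict_isMinorOf hRE hSE, ?_⟩
  exact isUnif_restrict (by rw [con_ground]; exact hSE) hSfin hS4 key

lemma mem_closure_singleton_symm {a b : α} (ha : a ∉ M.closure ∅) (h : a ∈ M.closure {b}) :
    b ∈ M.closure {a} := by
  have h' : a ∈ M.closure (insert b ∅) \ M.closure ∅ := by simpa using ⟨h, ha⟩
  simpa using (closure_exchange h').1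

lemma hasUnifMinor_of_two_lines (hefg : M.Indep {e, f, g}) (hef : e ≠ f) (heg : e ≠ g)
    (hfg : f ≠ g)
    (hx : x ∈ M.closure {e, f}) (hxe : x ∉ M.closure {e}) (hxf : x ∉ M.closure {f})
    (hy : y ∈ M.closure {e, g}) (hye : y ∉ M.closure {e}) (hyg : y ∉ M.closure {g}) :
    M.HasUnifMinor 3 4 := by
  have heE : e ∈ M.E := hefg.subset_ground (by simp)
  have hfE : f ∈ M.E := hefg.subset_ground (by simp)
  have hgE : g ∈ M.E := hefg.subset_ground (by simp)
  have hxE : x ∈ M.E := M.closure_subset_ground _ hx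
  have hyE : y ∈ M.E := M.closure_subset_ground _ hy
  have hig : M.Indep {g} := hefg.subset (by simp)
  have hfcl : f ∈ M.closure {f} := M.mem_closure_of_mem' rfl hfE
  have hgcl : g ∈ M.closure {g} := M.mem_closure_of_mem' rfl hgE
  have heef : e ∈ M.closure {e, f} := M.mem_closure_of_mem' (by simp) heE
  have hfef : f ∈ M.closure {e, f} := M.mem_closure_of_mem' (by simp) hfE
  have heeg : e ∈ M.closure {e, g} := M.mem_closure_of_mem' (by simp) heE
  have hgeg : g ∈ M.closure {e, g} := M.mem_closure_of_mem' (by simp) hgE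
  have hgef : g ∉ M.closure {e, f} := by
    have h0 := hefg.notMem_closure_diff_of_mem (show g ∈ ({e,f,g} : Set α) by simp)
    have hdiff : ({e, f, g} : Set α) \ {g} = {e, f} := by
      ext a
      simp only [mem_diff, mem_insert_iff, mem_singleton_iff]
      constructor
      · rintro ⟨rfl | rfl | rfl, h⟩ <;> tauto
      · rintro (rfl | rfl)
        · exact ⟨Or.inl rfl, heg⟩
        · exact ⟨Or.inr (Or.inl rfl), hfg⟩
    rwa [hdiff] at h0
  have hfeg : f ∉ M.closure {e, g} := by
    have h0 := hefg.notMem_closure_diff_of_mem (show f ∈ ({e,f,g} : Set α) by simp)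
    have hdiff : ({e, f, g} : Set α) \ {f} = {e, g} := by
      ext a
      simp only [mem_diff, mem_insert_iff, mem_singleton_iff]
      constructor
      · rintro ⟨rfl | rfl | rfl, h⟩ <;> tauto
      · rintro (rfl | rfl)
        · exact ⟨Or.inl rfl, hef⟩
        · exact ⟨Or.inr (Or.inr rfl), fun h => hfg h.symm⟩
    rwa [hdiff] at h0
  -- g ∈ cl {y, e}
  have hgy : g ∈ M.closure {y, e} := by
    have hy' : y ∈ M.closure (insert g {e}) \ M.closure {e} := ⟨by rwa [pair_comm] at hy, hye⟩
    exact (closure_exchange hy').1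
  -- distinctness of f, x, g, y
  have hfx : f ≠ x := fun h => hxf (by rw [← h]; exact hfcl)
  have hfy : f ≠ y := fun h => hfeg (by rw [h]; exact hy)
  have hxg : x ≠ g := fun h => hgef (by rw [← h]; exact hx)
  have hgy' : g ≠ y := fun h => hyg (by rw [← h]; exact hgcl)
  have key_y : y ∉ M.closure {e, f} := fun hyEF => hgef
    (closure_subset_closure_of_subset_closure
      (insert_subset hyEF (singleton_subset_iff.2 heef)) hgy)
  have hxy : x ≠ y := fun h => key_y (h ▸ hx)
  -- independence of the four triples
  have hclxf : M.closure {x, f} ⊆ M.closure {e, f} :=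
    closure_subset_closure_of_subset_closure (insert_subset hx (singleton_subset_iff.2 hfef))
  have hxf_i : M.Indep {x, f} := by
    have := (hefg.subset (by simp : ({f} : Set α) ⊆ {e,f,g})).insert_indep_iff_of_notMem
      (fun h => hfx (mem_singleton_iff.1 h).symm)
    exact this.2 ⟨hxE, hxf⟩
  have J1 : M.Indep (insert g {x, f}) := by
    rw [hxf_i.insert_indep_iff_of_notMem (by rintro (rfl | h); exacts [hxg rfl, hfg (mem_singleton_iff.1 h).symm])]
    exact ⟨hgE, fun h => hgef (hclxf h)⟩
  have J2 : M.Indep (insert y {x, f}) := by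
    rw [hxf_i.insert_indep_iff_of_notMem (by rintro (rfl | h); exacts [hxy rfl, hfy (mem_singleton_iff.1 h).symm])]
    exact ⟨hyE, fun h => key_y (hclxf h)⟩
  have hfg_i : M.Indep {f, g} := hefg.subset (by intro a; simp; tauto)
  have J3 : M.Indep (insert y {f, g}) := by
    rw [hfg_i.insert_indep_iff_of_notMem (by rintro (rfl | h); exacts [hfy rfl, hgy' (mem_singleton_iff.1 h).symm])]
    refine ⟨hyE, fun hyFG => ?_⟩
    have hy'' : y ∈ M.closure (insert f {g}) \ M.closure {g} := ⟨hyFG, hyg⟩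
    have hfyg : f ∈ M.closure {y, g} := (closure_exchange hy'').1
    exact hfeg (closure_subset_closure_of_subset_closure
      (insert_subset hy (singleton_subset_iff.2 hgeg)) hfyg)
  have hxg_i : M.Indep {x, g} := by
    have hxnl : x ∉ M.closure ∅ := fun h => hxf (M.closure_subset_closure (empty_subset _) h)
    rw [hig.insert_indep_iff_of_notMem (fun h => hxg (mem_singleton_iff.1 h))]
    refine ⟨hxE, fun hxg' => ?_⟩
    have : g ∈ M.closure {x} := mem_closure_singleton_symm hxnl hxg'
    exact hgef (closure_subset_closure_of_subset_closure
      (singleton_subset_iff.2 hx) this)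
  have J4 : M.Indep (insert y {x, g}) := by
    rw [hxg_i.insert_indep_iff_of_notMem (by rintro (rfl | h); exacts [hxy rfl, hgy' (mem_singleton_iff.1 h).symm])]
    refine ⟨hyE, fun hyXG => ?_⟩
    have hy'' : y ∈ M.closure (insert x {g}) \ M.closure {g} := ⟨hyXG, hyg⟩
    have hxyg : x ∈ M.closure {y, g} := (closure_exchange hy'').1
    have hxeg : x ∈ M.closure {e, g} := closure_subset_closure_of_subset_closure
      (insert_subset hy (singleton_subset_iff.2 hgeg)) hxyg
    have hx'' : x ∈ M.closure (insert g {e}) \ M.closure {e} := ⟨by rwa [pair_comm] at hxeg, hxe⟩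
    have hgxe : g ∈ M.closure {x, e} := (closure_exchange hx'').1
    exact hgef (closure_subset_closure_of_subset_closure
      (insert_subset hx (singleton_subset_iff.2 heef)) hgxe)
  -- the ground set of the uniform restriction
  set S : Set α := {f, x, g, y} with hS_def
  have hSE : S ⊆ M.E := by rintro a (rfl | rfl | rfl | rfl) <;> assumption
  have hSfin : S.Finite := (finite_singleton y).insert g |>.insert x |>.insert f
  have hS4 : S.ncard = 4 := by
    rw [hS_def, ncard_insert_of_notMem (by rintro (rfl | rfl | h); exacts [hfx rfl, hfg rfl, hfy (mem_singleton_iff.1 h)])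
        ((finite_singleton y).insert g |>.insert x),
      ncard_insert_of_notMem (by rintro (rfl | h); exacts [hxg rfl, hxy (mem_singleton_iff.1 h)]) ((finite_singleton y).insert g),
      ncard_pair hgy']
  have hSsub : S ⊆ M.closure {e, f, g} := by
    rintro a (rfl | rfl | rfl | rfl)
    · exact M.mem_closure_of_mem' (by simp) hfE
    · exact M.closure_subset_closure (by intro a; simp; tauto) hx
    · exact M.mem_closure_of_mem' (by simp) hgE
    · exact M.closure_subset_closure (by intro a; simp; tauto) hy
  have hSdep : ¬ M.Indep S := by
    intro hSi
    have hle := clcard_ncard hefg hSi hSsub ((finite_singleton g).insert f |>.insert e)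
    have h3 : ({e, f, g} : Set α).ncard ≤ 3 := by
      refine (ncard_insert_le _ _).trans ?_
      have := (ncard_insert_le f ({g} : Set α))
      simp only [ncard_singleton] at this ⊢
      omega
    omega
  have key : ∀ T ⊆ S, (M.Indep T ↔ T ≠ S) := by
    intro T hTS
    constructor
    · exact fun hTi hTeq => hSdep (hTeq ▸ hTi)
    · intro hTne
      obtain ⟨s, hsS, hsT⟩ := exists_of_ssubset (hTS.ssubset_of_ne hTne)
      have hTsub : ∀ a ∈ T, a ∈ S ∧ a ≠ s := fun a haT => ⟨hTS haT, fun h => hsT (h ▸ haT)⟩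
      rcases hsS with rfl | rfl | rfl | rfl
      · refine J4.subset fun a haT => ?_
        obtain ⟨haS, has⟩ := hTsub a haT
        rcases haS with rfl | rfl | rfl | rfl
        · exact absurd rfl has
        · simp
        · simp
        · simp
      · refine J3.subset fun a haT => ?_
        obtain ⟨haS, has⟩ := hTsub a haT
        rcases haS with rfl | rfl | rfl | rfl
        · simp
        · exact absurd rfl has
        · simp
        · simp
      · refine J2.subset fun a haT => ?_
        obtain ⟨haS, has⟩ := hTsub a haT
        rcases haS with rfl | rfl | rfl | rfl
        · simp
        · simp
        · exact absurd rfl has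
        · simp
      · refine J1.subset fun a haT => ?_
        obtain ⟨haS, has⟩ := hTsub a haT
        rcases haS with rfl | rfl | rfl | rfl
        · simp
        · simp
        · simp
        · exact absurd rfl has
  exact ⟨M ↾ S, restrict_isMinorOf hSE, isUnif_restrict hSE hSfin hS4 key⟩

lemma exists_minimal_closure_mem (hIfin : I.Finite) (he : e ∈ M.closure I) :
    ∃ I', I' ⊆ I ∧ e ∈ M.closure I' ∧ ∀ i ∈ I', e ∉ M.closure (I' \ {i}) := by
  have hfin : {J | J ⊆ I ∧ e ∈ M.closure J}.Finite :=
    hIfin.finite_subsets.subset (fun J hJ => hJ.1)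
  have hne : {J | J ⊆ I ∧ e ∈ M.closure J}.Nonempty := ⟨I, subset_rfl, he⟩
  obtain ⟨I', hI'S, hmin⟩ := Set.exists_min_image _ Set.ncard hfin hne
  refine ⟨I', hI'S.1, hI'S.2, fun i hi hcon => ?_⟩
  have hmem : (I' \ {i}) ∈ {J | J ⊆ I ∧ e ∈ M.closure J} := ⟨diff_subset.trans hI'S.1, hcon⟩
  have hlt : (I' \ {i}).ncard < I'.ncard :=
    ncard_diff_singleton_lt_of_mem hi (hIfin.subset hI'S.1)
  exact absurd (hmin _ hmem) (by omega)

lemma line_or_parallel (hminor : ¬ M.HasUnifMinor 3 4) (hI : M.Indep I) (hIfin : I.Finite)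
    (heI : e ∉ I) (hie : M.Indep {e}) (hecl : e ∈ M.closure I) :
    (∃ u ∈ I, u ∈ M.closure {e}) ∨
    (∃ u ∈ I, ∃ v ∈ I, M.Indep {e, v} ∧ u ∈ M.closure {e, v} ∧ u ∉ M.closure {e}
      ∧ u ∉ M.closure {v}) := by
  obtain ⟨I', hI'I, hecl', hmin⟩ := exists_minimal_closure_mem hIfin hecl
  have hI'i : M.Indep I' := hI.subset hI'I
  have hI'fin : I'.Finite := hIfin.subset hI'I
  have heI' : e ∉ I' := fun h => heI (hI'I h)
  have henl : e ∉ M.closure ∅ := by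
    have h := hie.notMem_closure_diff_of_mem (mem_singleton e)
    simpa using h
  have hne : I'.Nonempty := by
    rcases I'.eq_empty_or_nonempty with rfl | h
    · exact absurd (by simpa using hecl') henl
    · exact h
  obtain ⟨u, hu⟩ := hne
  by_cases h1 : I' = {u}
  · left
    exact ⟨u, hI'I hu, mem_closure_singleton_symm henl (h1 ▸ hecl')⟩
  · obtain ⟨v, hv, hvu⟩ : ∃ v ∈ I', v ≠ u := by
      by_contra hcon
      push_neg at hcon
      exact h1 (subset_antisymm (fun a ha => hcon a ha) (singleton_subset_iff.2 hu))
    by_cases h2 : I' ⊆ {u, v}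
    · have hI'uv : I' = {u, v} := subset_antisymm h2
        (insert_subset hu (singleton_subset_iff.2 hv))
      have hd1 : I' \ {u} = {v} := by
        rw [hI'uv]
        ext a
        simp only [mem_diff, mem_insert_iff, mem_singleton_iff]
        constructor
        · rintro ⟨rfl | rfl, h⟩ <;> tauto
        · rintro rfl; exact ⟨Or.inr rfl, hvu⟩
      have hd2 : I' \ {v} = {u} := by
        rw [hI'uv]
        ext a
        simp only [mem_diff, mem_insert_iff, mem_singleton_iff]
        constructor
        · rintro ⟨rfl | rfl, h⟩ <;> tauto
        · rintro rfl; exact ⟨Or.inl rfl, fun h => hvu h.symm⟩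
      have hev : e ∉ M.closure {v} := by have := hmin u hu; rwa [hd1] at this
      have heu : e ∉ M.closure {u} := by have := hmin v hv; rwa [hd2] at this
      have hexch : e ∈ M.closure (insert u {v}) \ M.closure {v} := ⟨by rwa [hI'uv] at hecl', hev⟩
      have hu' := closure_exchange hexch
      have hunl : u ∉ M.closure ∅ := fun hc =>
        hu'.2 (M.closure_subset_closure (empty_subset _) hc)
      have hue : u ∉ M.closure {e} := fun hc => heu (mem_closure_singleton_symm hunl hc)
      have hiev : M.Indep {e, v} := by
        rw [(hI'i.subset (singleton_subset_iff.2 hv)).insert_indep_iff_of_notMem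
          (fun hc => heI' (by rw [mem_singleton_iff] at hc; rw [hc]; exact hv))]
        exact ⟨M.closure_subset_ground I hecl, hev⟩
      exact Or.inr ⟨u, hI'I hu, v, hI'I hv, hiev, hu'.1, hue, hu'.2⟩
    · exfalso
      obtain ⟨w, hw, hwuv⟩ : ∃ w ∈ I', w ∉ ({u, v} : Set α) := by
        by_contra hcon
        push_neg at hcon
        exact h2 hcon
      apply hminor
      refine hasUnifMinor_of_circuit hI'i hI'fin heI' hecl' hmin ?_
      have hsub : ({u, v, w} : Set α) ⊆ I' :=
        insert_subset hu (insert_subset hv (singleton_subset_iff.2 hw))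
      have h3 : ({u, v, w} : Set α).ncard = 3 := by
        rw [ncard_insert_of_notMem (by
            rintro (rfl | hc)
            · exact hvu rfl
            · exact hwuv (Or.inl (mem_singleton_iff.1 hc).symm))
          ((finite_singleton w).insert v),
          ncard_pair (fun hc => hwuv (Or.inr hc.symm))]
      calc 3 = ({u, v, w} : Set α).ncard := h3.symm
        _ ≤ I'.ncard := ncard_le_ncard hsub hI'fin

lemma stepA (hminor : ¬ M.HasUnifMinor 3 4) (hEfin : M.E.Finite)
    (hef : M.Indep {e, f}) (hx : x ∈ M.closure {e, f}) (hxe : x ∉ M.closure {e})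
    (hxf : x ∉ M.closure {f}) (hI : M.Indep I) (hIX : Disjoint I (M.closure {e, f})) :
    M.Indep (I ∪ {e, f}) := by
  have heE : e ∈ M.E := hef.subset_ground (by simp)
  have hfE : f ∈ M.E := hef.subset_ground (by simp)
  have hie : M.Indep {e} := hef.subset (by simp)
  have hif : M.Indep {f} := hef.subset (by simp)
  have hfin : I.Finite := hEfin.subset hI.subset_ground
  have heef : e ∈ M.closure {e, f} := M.mem_closure_of_mem' (by simp) heE
  have hfef : f ∈ M.closure {e, f} := M.mem_closure_of_mem' (by simp) hfE
  have hef_ne : e ≠ f := by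
    intro h
    apply hxe
    have := hx
    rw [show ({e, f} : Set α) = {e} by rw [← h]; exact pair_eq_singleton e] at this
    exact this
  have hfe' : f ∉ M.closure {e} := by
    have h0 := hef.notMem_closure_diff_of_mem (show f ∈ ({e, f} : Set α) by simp)
    have : ({e, f} : Set α) \ {f} = {e} := by
      ext a
      simp only [mem_diff, mem_insert_iff, mem_singleton_iff]
      constructor
      · rintro ⟨rfl | rfl, h⟩ <;> tauto
      · rintro rfl; exact ⟨Or.inl rfl, hef_ne⟩
    rwa [this] at h0
  have hef' : e ∉ M.closure {f} := by
    have h0 := hef.notMem_closure_diff_of_mem (show e ∈ ({e, f} : Set α) by simp)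
    have : ({e, f} : Set α) \ {e} = {f} := by
      ext a
      simp only [mem_diff, mem_insert_iff, mem_singleton_iff]
      constructor
      · rintro ⟨rfl | rfl, h⟩ <;> tauto
      · rintro rfl; exact ⟨Or.inr rfl, fun h => hef_ne h.symm⟩
    rwa [this] at h0
  have heI : e ∉ I := fun h => (hIX.ne_of_mem h heef) rfl
  have hfI : f ∉ I := fun h => (hIX.ne_of_mem h hfef) rfl
  have hindep_efv : ∀ v ∈ I, M.Indep {e, f, v} := by
    intro v hvI
    have hvcl : v ∉ M.closure {e, f} := fun h => (hIX.ne_of_mem hvI h) rfl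
    have : M.Indep (insert v {e, f}) := by
      rw [hef.insert_indep_iff_of_notMem (fun h => hvcl (M.mem_closure_of_mem' h
        (hI.subset_ground hvI)))]
      exact ⟨hI.subset_ground hvI, hvcl⟩
    exact this.subset (by intro a ha; simp at ha ⊢; tauto)
  have step1 : M.Indep (insert e I) := by
    rw [hI.insert_indep_iff_of_notMem heI]
    refine ⟨heE, fun hecl => ?_⟩
    rcases line_or_parallel hminor hI hfin heI hie hecl with
      ⟨u, huI, hucl⟩ | ⟨u, huI, v, hvI, hev, hucl, hue, huv⟩
    · exact (hIX.ne_of_mem huI (M.closure_subset_closure (by simp) hucl)) rfl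
    · apply hminor
      have hvcl : v ∉ M.closure {e, f} := fun h => (hIX.ne_of_mem hvI h) rfl
      exact hasUnifMinor_of_two_lines (hindep_efv v hvI) hef_ne
        (fun h => hvcl (h ▸ heef)) (fun h => hvcl (h ▸ hfef)) hx hxe hxf hucl hue huv
  have hfeI : f ∉ insert e I := by
    rintro (rfl | h)
    · exact hef_ne rfl
    · exact hfI h
  have step2 : M.Indep (insert f (insert e I)) := by
    rw [step1.insert_indep_iff_of_notMem hfeI]
    refine ⟨hfE, fun hfcl => ?_⟩
    rcases line_or_parallel hminor step1 (hEfin.subset step1.subset_ground) hfeI hif hfcl with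
      ⟨u, huI, hucl⟩ | ⟨u, huI, v, hvI, hfv, hucl, huf, huv⟩
    · rcases huI with rfl | huI
      · exact hef' hucl
      · exact (hIX.ne_of_mem huI (M.closure_subset_closure (by simp) hucl)) rfl
    · rcases hvI with hv_eq | hvI
      · -- v = e
        rcases huI with hu_eq | huI
        · exact huv (by rw [hu_eq, hv_eq]; exact M.mem_closure_of_mem' rfl heE)
        · refine (hIX.ne_of_mem huI ?_) rfl
          rw [hv_eq] at hucl
          rwa [pair_comm] at hucl
      · -- v ∈ I : two lines centered at f
        apply hminor
        have hvcl : v ∉ M.closure {e, f} := fun h => (hIX.ne_of_mem hvI h) rfl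
        have hfev : M.Indep {f, e, v} :=
          (hindep_efv v hvI).subset (by intro a ha; simp at ha ⊢; tauto)
        exact hasUnifMinor_of_two_lines hfev (fun h => hef_ne h.symm)
          (fun h => hvcl (h ▸ hfef)) (fun h => hvcl (h ▸ heef))
          (by rwa [pair_comm] at hx) hxf hxe hucl huf huv
  exact step2.subset (by intro a ha; simp at ha ⊢; tauto)

lemma stepB {X : Set α} (hminor : ¬ M.HasUnifMinor 3 4) (hEfin : M.E.Finite)
    (noline : ¬ ∃ a ∈ X, ∃ b ∈ X, ∃ c ∈ X, M.Indep {a, b} ∧ c ∈ M.closure {a, b} ∧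
      c ∉ M.closure {a} ∧ c ∉ M.closure {b})
    (heX : e ∈ X) (hie : M.Indep {e}) (hI : M.Indep I) (hIX : I ⊆ X)
    (hIdisj : Disjoint I (M.closure {e})) : M.Indep (insert e I) := by
  have heE : e ∈ M.E := hie.subset_ground rfl
  have heI : e ∉ I := fun h => (hIdisj.ne_of_mem h (M.mem_closure_of_mem' rfl heE)) rfl
  rw [hI.insert_indep_iff_of_notMem heI]
  refine ⟨heE, fun hecl => ?_⟩
  rcases line_or_parallel hminor hI (hEfin.subset hI.subset_ground) heI hie hecl with
    ⟨u, huI, hucl⟩ | ⟨u, huI, v, hvI, hev, hucl, hue, huv⟩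
  · exact (hIdisj.ne_of_mem huI hucl) rfl
  · exact noline ⟨e, heX, v, hIX hvI, u, hIX huI, hev, hucl, hue, huv⟩

lemma IsBasis.ncard_eq_ncard {J X : Set α} (h1 : M.IsBasis I X) (h2 : M.IsBasis J X) :
    I.ncard = J.ncard := by
  rw [Set.ncard_def, Set.ncard_def, h1.isBase_restrict.encard_eq_encard_of_isBase h2.isBase_restrict]

lemma ne_of_line (hx : x ∈ M.closure {e, f}) (hxe : x ∉ M.closure {e}) : e ≠ f := by
  intro h
  subst h
  rw [pair_eq_singleton] at hx
  exact hxe hx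

private lemma glue {s : ℕ} {F X X' : Set α} {P' : Fin s → Set α} (hFX : F ⊆ X) (hX' : X' ⊆ X)
    (hX'F : Disjoint X' F) (hP'X : ∀ j, P' j ⊆ X') (hdisj : ∀ i j, i ≠ j → Disjoint (P' i) (P' j))
    (hcovF : ∀ a ∈ X, M.Indep {a} → a ∈ F ∨ a ∈ X')
    (hcov' : ∀ a ∈ X', M.Indep {a} → ∃ j, a ∈ P' j)
    (hbF : ∀ I, I ⊆ F → M.Indep I → I.ncard ≤ 2)
    (hb' : ∀ j I, I ⊆ P' j → M.Indep I → I.ncard ≤ 2) :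
    ∃ P : Fin (s + 1) → Set α, (∀ j, P j ⊆ X) ∧ (∀ i j, i ≠ j → Disjoint (P i) (P j)) ∧
      (∀ a ∈ X, M.Indep {a} → ∃ j, a ∈ P j) ∧ (∀ j I, I ⊆ P j → M.Indep I → I.ncard ≤ 2) := by
  refine ⟨Fin.cons F P', fun j => ?_, fun i j hij => ?_, fun a haX hai => ?_, fun j => ?_⟩
  · rcases Fin.eq_zero_or_eq_succ j with rfl | ⟨j', rfl⟩
    · simpa using hFX
    · simpa using (hP'X j').trans hX'
  · rcases Fin.eq_zero_or_eq_succ i with rfl | ⟨i', rfl⟩ <;>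
      rcases Fin.eq_zero_or_eq_succ j with rfl | ⟨j', rfl⟩
    · exact absurd rfl hij
    · simpa using (hX'F.mono_left (hP'X j')).symm
    · simpa using hX'F.mono_left (hP'X i')
    · simpa using hdisj i' j' (fun h => hij (by rw [h]))
  · rcases hcovF a haX hai with haF | haX'
    · exact ⟨0, by simpa using haF⟩
    · obtain ⟨j, hj⟩ := hcov' a haX' hai
      exact ⟨j.succ, by simpa using hj⟩
  · rcases Fin.eq_zero_or_eq_succ j with rfl | ⟨j', rfl⟩
    · simpa using hbF
    · simpa using hb' j'

lemma core_partition (hminor : ¬ M.HasUnifMinor 3 4) (hEfin : M.E.Finite) :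
    ∀ (s : ℕ) (X : Set α), X ⊆ M.E →
    (∃ B, B ⊆ X ∧ M.Indep B ∧ B.ncard = 2 * s) →
    (∀ I, I ⊆ X → M.Indep I → I.ncard ≤ 2 * s) →
    ∃ P : Fin s → Set α, (∀ j, P j ⊆ X) ∧
      (∀ i j, i ≠ j → Disjoint (P i) (P j)) ∧
      (∀ a ∈ X, M.Indep {a} → ∃ j, a ∈ P j) ∧
      (∀ j I, I ⊆ P j → M.Indep I → I.ncard ≤ 2) := by
  intro s
  induction s with
  | zero =>
    intro X hXE hex hub
    refine ⟨Fin.elim0, fun j => j.elim0, fun i => i.elim0, fun a haX hai => ?_, fun j => j.elim0⟩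
    have := hub {a} (singleton_subset_iff.2 haX) hai
    simp [ncard_singleton] at this
  | succ s IH =>
    rintro X hXE ⟨B₀, hB₀X, hB₀i, hB₀c⟩ hub
    have hB₀fin : B₀.Finite := hEfin.subset hB₀i.subset_ground
    by_cases hline : ∃ a ∈ X, ∃ b ∈ X, ∃ c ∈ X, M.Indep {a, b} ∧ c ∈ M.closure {a, b} ∧
        c ∉ M.closure {a} ∧ c ∉ M.closure {b}
    · -- Case A : a line {e,f} with extra point x exists inside X
      obtain ⟨e, heX, f, hfX, x, hxX, hef, hx, hxe, hxf⟩ := hline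
      have hef_ne : e ≠ f := ne_of_line hx hxe
      have heE : e ∈ M.E := hef.subset_ground (by simp)
      have hfE : f ∈ M.E := hef.subset_ground (by simp)
      set F : Set α := M.closure {e, f} ∩ X with hF_def
      set X' : Set α := X \ F with hX'_def
      have hX'X : X' ⊆ X := diff_subset
      have hX'E : X' ⊆ M.E := hX'X.trans hXE
      have heF : e ∈ F := ⟨M.mem_closure_of_mem' (by simp) heE, heX⟩
      have hfF : f ∈ F := ⟨M.mem_closure_of_mem' (by simp) hfE, hfX⟩
      have hdisjcl : ∀ I, I ⊆ X' → Disjoint I (M.closure {e, f}) := by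
        intro I hIX'
        rw [disjoint_left]
        intro a haI hacl
        exact (hIX' haI).2 ⟨hacl, (hIX' haI).1⟩
      have hstep : ∀ I, I ⊆ X' → M.Indep I → M.Indep (I ∪ {e, f}) :=
        fun I hIX' hIi => stepA hminor hEfin hef hx hxe hxf hIi (hdisjcl I hIX')
      have hpairfin : ({e, f} : Set α).Finite := (finite_singleton f).insert e
      have hupper : ∀ I, I ⊆ X' → M.Indep I → I.ncard ≤ 2 * s := by
        intro I hIX' hIi
        have hIfin : I.Finite := hEfin.subset hIi.subset_ground
        have hun := hub (I ∪ {e, f}) (union_subset (hIX'.trans hX'X)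
          (insert_subset heX (singleton_subset_iff.2 hfX))) (hstep I hIX' hIi)
        have hd : Disjoint I ({e, f} : Set α) := by
          rw [disjoint_left]
          rintro a haI (rfl | rfl)
          · exact (hIX' haI).2 heF
          · exact (hIX' haI).2 hfF
        rw [ncard_union_eq hd hIfin hpairfin, ncard_pair hef_ne] at hun
        omega
      have hF2 : ∀ I, I ⊆ F → M.Indep I → I.ncard ≤ 2 := by
        intro I hIF hIi
        have := clcard_ncard hef hIi ((hIF.trans inter_subset_left)) hpairfin
        calc I.ncard ≤ ({e, f} : Set α).ncard := this
          _ ≤ 2 := by rw [ncard_pair hef_ne]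
      obtain ⟨B₁, hB₁⟩ := M.exists_isBasis X' hX'E
      have hlow : B₁.ncard = 2 * s := by
        refine le_antisymm (hupper _ hB₁.subset hB₁.indep) ?_
        have hd : B₀ \ F ⊆ X' := fun a ha => ⟨hB₀X ha.1, ha.2⟩
        obtain ⟨B₂, hB₂, hsub2⟩ := (hB₀i.subset diff_subset).subset_isBasis_of_subset hd hX'E
        have h12 : B₁.ncard = B₂.ncard := hB₁.ncard_eq_ncard hB₂
        have hiF : (B₀ ∩ F).ncard ≤ 2 := hF2 _ inter_subset_right (hB₀i.subset inter_subset_left)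
        have hsplit : (B₀ \ (B₀ ∩ F)).ncard + (B₀ ∩ F).ncard = B₀.ncard :=
          ncard_diff_add_ncard_of_subset inter_subset_left hB₀fin
        rw [diff_self_inter] at hsplit
        have : (B₀ \ F).ncard ≤ B₂.ncard := ncard_le_ncard hsub2 (hEfin.subset hB₂.indep.subset_ground)
        omega
      obtain ⟨P', hP'X, hP'disj, hP'cov, hP'b⟩ := IH X' hX'E ⟨B₁, hB₁.subset, hB₁.indep, hlow⟩ hupper
      exact glue (inter_subset_right) hX'X disjoint_sdiff_left hP'X hP'disj
        (fun a haX hai => by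
          by_cases haF : a ∈ F
          · exact Or.inl haF
          · exact Or.inr ⟨haX, haF⟩) hP'cov hF2 hP'b
    · -- Case B : no line inside X; remove two parallel classes
      push_neg at hline
      have hnoline : ¬ ∃ a ∈ X, ∃ b ∈ X, ∃ c ∈ X, M.Indep {a, b} ∧ c ∈ M.closure {a, b} ∧
          c ∉ M.closure {a} ∧ c ∉ M.closure {b} := by
        push_neg
        exact hline
      obtain ⟨e, heB₀⟩ : B₀.Nonempty := (ncard_pos hB₀fin).1 (by omega)
      have heX : e ∈ X := hB₀X heB₀
      have hie : M.Indep {e} := hB₀i.subset (singleton_subset_iff.2 heB₀)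
      have heE : e ∈ M.E := hie.subset_ground rfl
      set F1 : Set α := M.closure {e} ∩ X with hF1_def
      set X1 : Set α := X \ F1 with hX1_def
      have hX1X : X1 ⊆ X := diff_subset
      have hX1E : X1 ⊆ M.E := hX1X.trans hXE
      have heF1 : e ∈ F1 := ⟨M.mem_closure_of_mem' rfl heE, heX⟩
      have hstep1 : ∀ I, I ⊆ X1 → M.Indep I → M.Indep (insert e I) := by
        intro I hIX1 hIi
        refine stepB hminor hEfin hnoline heX hie hIi (hIX1.trans hX1X) ?_
        rw [disjoint_left]
        intro a haI hacl
        exact (hIX1 haI).2 ⟨hacl, (hIX1 haI).1⟩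
      have hupper1 : ∀ I, I ⊆ X1 → M.Indep I → I.ncard ≤ 2 * s + 1 := by
        intro I hIX1 hIi
        have hIfin : I.Finite := hEfin.subset hIi.subset_ground
        have heI : e ∉ I := fun h => (hIX1 h).2 heF1
        have hun := hub (insert e I) (insert_subset heX (hIX1.trans hX1X)) (hstep1 I hIX1 hIi)
        rw [ncard_insert_of_notMem heI hIfin] at hun
        omega
      have hsing : ∀ (a : α), M.Indep {a} → ∀ I, I ⊆ M.closure {a} → M.Indep I → I.ncard ≤ 1 := by
        intro a hia I hIcl hIi
        have := clcard_ncard hia hIi hIcl (finite_singleton a)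
        simpa using this
      obtain ⟨B₁, hB₁⟩ := M.exists_isBasis X1 hX1E
      have hlow1 : B₁.ncard = 2 * s + 1 := by
        refine le_antisymm (hupper1 _ hB₁.subset hB₁.indep) ?_
        have hd : B₀ \ F1 ⊆ X1 := fun a ha => ⟨hB₀X ha.1, ha.2⟩
        obtain ⟨B₂, hB₂, hsub2⟩ := (hB₀i.subset diff_subset).subset_isBasis_of_subset hd hX1E
        have h12 : B₁.ncard = B₂.ncard := hB₁.ncard_eq_ncard hB₂
        have hiF : (B₀ ∩ F1).ncard ≤ 1 := hsing e hie _ (inter_subset_right.trans inter_subset_left)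
          (hB₀i.subset inter_subset_left)
        have hsplit : (B₀ \ (B₀ ∩ F1)).ncard + (B₀ ∩ F1).ncard = B₀.ncard :=
          ncard_diff_add_ncard_of_subset inter_subset_left hB₀fin
        rw [diff_self_inter] at hsplit
        have : (B₀ \ F1).ncard ≤ B₂.ncard :=
          ncard_le_ncard hsub2 (hEfin.subset hB₂.indep.subset_ground)
        omega
      obtain ⟨e₂, he₂B₁⟩ : B₁.Nonempty := (ncard_pos (hEfin.subset hB₁.indep.subset_ground)).1
        (by omega)
      have he₂X1 : e₂ ∈ X1 := hB₁.subset he₂B₁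
      have hie₂ : M.Indep {e₂} := hB₁.indep.subset (singleton_subset_iff.2 he₂B₁)
      have he₂E : e₂ ∈ M.E := hie₂.subset_ground rfl
      set F2 : Set α := M.closure {e₂} ∩ X1 with hF2_def
      set X2 : Set α := X1 \ F2 with hX2_def
      have hX2X1 : X2 ⊆ X1 := diff_subset
      have hX2E : X2 ⊆ M.E := hX2X1.trans hX1E
      have he₂F2 : e₂ ∈ F2 := ⟨M.mem_closure_of_mem' rfl he₂E, he₂X1⟩
      have hnoline1 : ¬ ∃ a ∈ X1, ∃ b ∈ X1, ∃ c ∈ X1, M.Indep {a, b} ∧ c ∈ M.closure {a, b} ∧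
          c ∉ M.closure {a} ∧ c ∉ M.closure {b} := by
        rintro ⟨a, ha, b, hb, c, hc, h⟩
        exact hnoline ⟨a, hX1X ha, b, hX1X hb, c, hX1X hc, h⟩
      have hstep2 : ∀ I, I ⊆ X2 → M.Indep I → M.Indep (insert e (insert e₂ I)) := by
        intro I hIX2 hIi
        have h2 : M.Indep (insert e₂ I) := by
          refine stepB hminor hEfin hnoline1 he₂X1 hie₂ hIi (hIX2.trans hX2X1) ?_
          rw [disjoint_left]
          intro a haI hacl
          exact (hIX2 haI).2 ⟨hacl, (hIX2 haI).1⟩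
        exact hstep1 _ (insert_subset he₂X1 (hIX2.trans hX2X1)) h2
      have he₂I : ∀ I, I ⊆ X2 → e₂ ∉ I := fun I hIX2 h => (hIX2 h).2 he₂F2
      have heI2 : ∀ I, I ⊆ X2 → e ∉ insert e₂ I := by
        intro I hIX2
        rintro (rfl | h)
        · exact (he₂X1).2 heF1
        · exact ((hIX2 h).1).2 heF1
      have hupper2 : ∀ I, I ⊆ X2 → M.Indep I → I.ncard ≤ 2 * s := by
        intro I hIX2 hIi
        have hIfin : I.Finite := hEfin.subset hIi.subset_ground
        have hun := hub (insert e (insert e₂ I))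
          (insert_subset heX (insert_subset (hX1X he₂X1) ((hIX2.trans hX2X1).trans hX1X)))
          (hstep2 I hIX2 hIi)
        rw [ncard_insert_of_notMem (heI2 I hIX2) (hIfin.insert e₂),
          ncard_insert_of_notMem (he₂I I hIX2) hIfin] at hun
        omega
      obtain ⟨B₂, hB₂⟩ := M.exists_isBasis X2 hX2E
      have hlow2 : B₂.ncard = 2 * s := by
        refine le_antisymm (hupper2 _ hB₂.subset hB₂.indep) ?_
        have hd : B₁ \ F2 ⊆ X2 := fun a ha => ⟨hB₁.subset ha.1, ha.2⟩
        obtain ⟨B₃, hB₃, hsub3⟩ := (hB₁.indep.subset diff_subset).subset_isBasis_of_subset hd hX2E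
        have h23 : B₂.ncard = B₃.ncard := hB₂.ncard_eq_ncard hB₃
        have hiF : (B₁ ∩ F2).ncard ≤ 1 := hsing e₂ hie₂ _
          (inter_subset_right.trans inter_subset_left) (hB₁.indep.subset inter_subset_left)
        have hsplit : (B₁ \ (B₁ ∩ F2)).ncard + (B₁ ∩ F2).ncard = B₁.ncard :=
          ncard_diff_add_ncard_of_subset inter_subset_left (hEfin.subset hB₁.indep.subset_ground)
        rw [diff_self_inter] at hsplit
        have : (B₁ \ F2).ncard ≤ B₃.ncard :=
          ncard_le_ncard hsub3 (hEfin.subset hB₃.indep.subset_ground)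
        omega
      obtain ⟨P', hP'X, hP'disj, hP'cov, hP'b⟩ := IH X2 hX2E ⟨B₂, hB₂.subset, hB₂.indep, hlow2⟩
        hupper2
      refine glue (F := F1 ∪ F2) (X' := X2) (union_subset inter_subset_right (inter_subset_right.trans hX1X))
        (hX2X1.trans hX1X) ?_ hP'X hP'disj ?_ hP'cov ?_ hP'b
      · rw [disjoint_union_right]
        constructor
        · rw [disjoint_left]
          intro a ha h
          exact ((hX2X1 ha).2) h
        · exact disjoint_sdiff_left
      · intro a haX hai
        by_cases h1 : a ∈ F1
        · exact Or.inl (Or.inl h1)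
        · by_cases h2 : a ∈ F2
          · exact Or.inl (Or.inr h2)
          · exact Or.inr ⟨⟨haX, h1⟩, h2⟩
      · intro I hIF hIi
        have hIfin : I.Finite := hEfin.subset hIi.subset_ground
        have h1 : (I ∩ F1).ncard ≤ 1 := hsing e hie _ (inter_subset_right.trans inter_subset_left)
          (hIi.subset inter_subset_left)
        have h2 : (I \ F1).ncard ≤ 1 := by
          refine hsing e₂ hie₂ _ (fun a ha => ?_) (hIi.subset diff_subset)
          rcases hIF ha.1 with h | h
          · exact absurd h ha.2
          · exact h.1
        have hcover : I = (I ∩ F1) ∪ (I \ F1) := by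
          rw [inter_union_diff]
        calc I.ncard = ((I ∩ F1) ∪ (I \ F1)).ncard := by rw [← hcover]
          _ ≤ (I ∩ F1).ncard + (I \ F1).ncard := ncard_union_le _ _
          _ ≤ 2 := by omega

lemma count_le : ∀ (s : ℕ) (P : Fin s → Set α), (∀ j, (P j).Finite) →
    (∀ i j, i ≠ j → Disjoint (P i) (P j)) → ∀ (𝒜 : Finset (Set α)),
    (∀ B ∈ 𝒜, B ⊆ ⋃ j, P j) → (∀ B ∈ 𝒜, ∀ j, (B ∩ P j).ncard = 2) →
    𝒜.card ≤ ∏ j, ((P j).ncard.choose 2) := by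
  intro s
  induction s with
  | zero =>
    intro P _ _ 𝒜 hcov _
    have hsub : 𝒜 ⊆ {(∅ : Set α)} := by
      intro B hB
      rw [Finset.mem_singleton]
      refine eq_empty_iff_forall_notMem.2 fun a ha => ?_
      obtain ⟨j, -⟩ := mem_iUnion.1 (hcov B hB ha)
      exact j.elim0
    simpa using Finset.card_le_card hsub
  | succ s IH =>
    intro P hPfin hPdisj 𝒜 hcov htr
    classical
    set L : Set α := P (Fin.last s) with hL
    set f : Set α → Set α := fun B => B ∩ L with hf
    have hcastne : ∀ j : Fin s, (Fin.castSucc j) ≠ Fin.last s := fun j => (Fin.castSucc_lt_last j).ne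
    have key : ∀ p ∈ 𝒜.image f, (𝒜.filter (fun B => f B = p)).card ≤
        ∏ j : Fin s, ((P (Fin.castSucc j)).ncard.choose 2) := by
      intro p _
      set 𝒯 := 𝒜.filter (fun B => f B = p) with h𝒯
      have hinj : Set.InjOn (fun B => B \ L) ↑𝒯 := by
        intro B1 h1 B2 h2 hEq
        simp only [h𝒯, Finset.coe_filter, mem_setOf_eq] at h1 h2
        have e1 : ∀ B : Set α, B = (B \ L) ∪ f B := fun B => by
          simp only [hf]
          exact (diff_union_inter B L).symm
        have hEq' : B1 \ L = B2 \ L := hEq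
        rw [e1 B1, e1 B2, h1.2, h2.2, hEq']
      have hcard : 𝒯.card = (𝒯.image (fun B => B \ L)).card :=
        (Finset.card_image_of_injOn hinj).symm
      rw [hcard]
      refine IH (fun j => P (Fin.castSucc j)) (fun j => hPfin _)
        (fun i j hij => hPdisj _ _ (fun h => hij (Fin.castSucc_injective _ h))) _ ?_ ?_
      · intro C hC
        obtain ⟨B, hB𝒯, rfl⟩ := Finset.mem_image.1 hC
        have hB𝒜 : B ∈ 𝒜 := (Finset.mem_filter.1 hB𝒯).1
        intro a ha
        obtain ⟨j, hj⟩ := mem_iUnion.1 (hcov B hB𝒜 ha.1)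
        rw [mem_iUnion]
        rcases Fin.eq_castSucc_or_eq_last j with ⟨j', rfl⟩ | rfl
        · exact ⟨j', hj⟩
        · exact absurd hj ha.2
      · intro C hC j
        obtain ⟨B, hB𝒯, rfl⟩ := Finset.mem_image.1 hC
        have hB𝒜 : B ∈ 𝒜 := (Finset.mem_filter.1 hB𝒯).1
        have hEq : (B \ L) ∩ P (Fin.castSucc j) = B ∩ P (Fin.castSucc j) := by
          ext a
          constructor
          · exact fun h => ⟨h.1.1, h.2⟩
          · exact fun h => ⟨⟨h.1, fun haL =>
              ((hPdisj _ _ (hcastne j)).ne_of_mem h.2 haL) rfl⟩, h.2⟩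
        rw [hEq]
        exact htr B hB𝒜 _
    have himgcard : (𝒜.image f).card ≤ (P (Fin.last s)).ncard.choose 2 := by
      have hsub : 𝒜.image f ⊆ (Finset.powersetCard 2 (hPfin (Fin.last s)).toFinset).image
          (fun q : Finset α => (q : Set α)) := by
        intro p hp
        obtain ⟨B, hB, rfl⟩ := Finset.mem_image.1 hp
        have h2 : (B ∩ L).ncard = 2 := htr B hB (Fin.last s)
        have hfinBL : (B ∩ L).Finite := (hPfin _).subset inter_subset_right
        have hqmem : hfinBL.toFinset ∈ Finset.powersetCard 2 (hPfin (Fin.last s)).toFinset := by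
          rw [Finset.mem_powersetCard]
          constructor
          · intro a ha
            rw [Set.Finite.mem_toFinset] at ha
            rw [Set.Finite.mem_toFinset]
            exact ha.2
          · rw [← ncard_eq_toFinset_card _ hfinBL]
            exact h2
        exact Finset.mem_image.2 ⟨hfinBL.toFinset, hqmem, hfinBL.coe_toFinset⟩
      calc (𝒜.image f).card ≤ _ := Finset.card_le_card hsub
        _ ≤ (Finset.powersetCard 2 (hPfin (Fin.last s)).toFinset).card := Finset.card_image_le
        _ = ((hPfin (Fin.last s)).toFinset.card).choose 2 := by rw [Finset.card_powersetCard]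
        _ = (P (Fin.last s)).ncard.choose 2 := by rw [← ncard_eq_toFinset_card _ (hPfin _)]
    calc 𝒜.card = ∑ p ∈ 𝒜.image f, (𝒜.filter fun B => f B = p).card :=
        Finset.card_eq_sum_card_image f 𝒜
      _ ≤ ∑ _p ∈ 𝒜.image f, ∏ j : Fin s, ((P (Fin.castSucc j)).ncard.choose 2) :=
        Finset.sum_le_sum key
      _ = (𝒜.image f).card * ∏ j : Fin s, ((P (Fin.castSucc j)).ncard.choose 2) := by
        rw [Finset.sum_const, smul_eq_mul]
      _ ≤ ((P (Fin.last s)).ncard.choose 2) * ∏ j : Fin s, ((P (Fin.castSucc j)).ncard.choose 2) :=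
        Nat.mul_le_mul_right _ himgcard
      _ = ∏ j : Fin (s + 1), ((P j).ncard.choose 2) := by
        rw [Fin.prod_univ_castSucc]
        ring

lemma ncard_le_sum_cover : ∀ (s : ℕ) (T : Fin s → Set α), (∀ j, (T j).Finite) →
    ∀ B, B ⊆ (⋃ j, T j) → B.ncard ≤ ∑ j, (T j).ncard := by
  intro s
  induction s with
  | zero =>
    intro T _ B hB
    have : B = ∅ := by
      refine eq_empty_iff_forall_notMem.2 fun a ha => ?_
      obtain ⟨j, -⟩ := mem_iUnion.1 (hB ha)
      exact j.elim0
    simp [this]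
  | succ s IH =>
    intro T hTfin B hB
    set L := T (Fin.last s)
    have hBfin : B.Finite := (Set.finite_iUnion hTfin).subset hB
    have hsplit : B = (B \ L) ∪ (B ∩ L) := (diff_union_inter B L).symm
    have h1 : (B \ L).ncard ≤ ∑ j : Fin s, (T (Fin.castSucc j)).ncard := by
      refine IH _ (fun j => hTfin _) _ ?_
      intro a ha
      obtain ⟨j, hj⟩ := mem_iUnion.1 (hB ha.1)
      rw [mem_iUnion]
      rcases Fin.eq_castSucc_or_eq_last j with ⟨j', rfl⟩ | rfl
      · exact ⟨j', hj⟩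
      · exact absurd hj ha.2
    have h2 : (B ∩ L).ncard ≤ L.ncard := ncard_le_ncard inter_subset_right (hTfin _)
    calc B.ncard = ((B \ L) ∪ (B ∩ L)).ncard := by rw [← hsplit]
      _ ≤ (B \ L).ncard + (B ∩ L).ncard := ncard_union_le _ _
      _ ≤ (∑ j : Fin s, (T (Fin.castSucc j)).ncard) + L.ncard := add_le_add h1 h2
      _ = ∑ j : Fin (s + 1), (T j).ncard := (Fin.sum_univ_castSucc (fun j => (T j).ncard)).symm

lemma sum_ncard_le_of_disjoint : ∀ (s : ℕ) (T : Fin s → Set α) (E : Set α), (∀ j, T j ⊆ E) →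
    (∀ i j, i ≠ j → Disjoint (T i) (T j)) → E.Finite → ∑ j, (T j).ncard ≤ E.ncard := by
  intro s
  induction s with
  | zero => intro T E _ _ _; simp
  | succ s IH =>
    intro T E hTE hTdisj hEfin
    set L := T (Fin.last s)
    have hcastne : ∀ j : Fin s, (Fin.castSucc j) ≠ Fin.last s := fun j => (Fin.castSucc_lt_last j).ne
    have h1 : ∑ j : Fin s, (T (Fin.castSucc j)).ncard ≤ (E \ L).ncard := by
      refine IH _ _ (fun j a ha => ⟨hTE _ ha, fun haL =>
        ((hTdisj _ _ (hcastne j)).ne_of_mem ha haL) rfl⟩)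
        (fun i j hij => hTdisj _ _ (fun h => hij (Fin.castSucc_injective _ h))) (hEfin.diff)
    have h2 : (E \ L).ncard + L.ncard = E.ncard :=
      ncard_diff_add_ncard_of_subset (hTE _) hEfin
    calc ∑ j : Fin (s + 1), (T j).ncard
        = (∑ j : Fin s, (T (Fin.castSucc j)).ncard) + L.ncard := Fin.sum_univ_castSucc (fun j => (T j).ncard)
      _ ≤ (E \ L).ncard + L.ncard := by omega
      _ = E.ncard := h2

lemma amgm {s : ℕ} (hs : s ≠ 0) (z : Fin s → ℝ) (hz : ∀ j, 0 ≤ z j) :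
    ∏ j, z j ≤ ((∑ j, z j) / s) ^ s := by
  have hw : ∑ _j : Fin s, (1 / (s : ℝ)) = 1 := by
    rw [Finset.sum_const, Finset.card_univ, Fintype.card_fin, nsmul_eq_mul]
    field_simp
  have h1 := Real.geom_mean_le_arith_mean_weighted Finset.univ (fun _ => 1 / (s : ℝ)) z
    (fun i _ => by positivity) hw (fun i _ => hz i)
  have h2 : ∑ j, (1 / (s : ℝ)) * z j = (∑ j, z j) / s := by
    rw [← Finset.mul_sum]
    ring
  have h3 : (∏ j, z j ^ (1 / (s : ℝ))) ^ (s : ℕ) = ∏ j, z j := by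
    rw [← Finset.prod_pow]
    refine Finset.prod_congr rfl fun j _ => ?_
    rw [← Real.rpow_natCast (z j ^ (1 / (s : ℝ))) s, ← Real.rpow_mul (hz j)]
    rw [one_div, inv_mul_cancel₀ (by exact_mod_cast hs : (s : ℝ) ≠ 0), Real.rpow_one]
  calc ∏ j, z j = (∏ j, z j ^ (1 / (s : ℝ))) ^ (s : ℕ) := h3.symm
    _ ≤ ((∑ j, z j) / s) ^ (s : ℕ) := by
        refine pow_le_pow_left₀ (Finset.prod_nonneg fun j _ => ?_) (h1.trans_eq h2) s
        exact Real.rpow_nonneg (hz j) _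

end Matroid

/-- Every `n`-element rank-`r` matroid (`r` even, `n > r ≥ 2`) with no `U_{3,4}`-minor has at
most `binom(2n/r, 2)^(r/2)` bases, where `binom(x,2) = x(x-1)/2` for real `x`. -/
theorem unif_34_minor_free_base_bound (n r : ℕ) (hr : 2 ≤ r) (hrn : r < n) (hre : Even r)
    (M : Matroid α) (hfin : M.E.Finite) (hn : M.E.ncard = n) (hrank : M.RankEq r)
    (hminor : ¬ M.HasUnifMinor 3 4) :
    (M.numBases : ℝ) ≤
      ((2 * (n : ℝ) / (r : ℝ)) * (2 * (n : ℝ) / (r : ℝ) - 1) / 2) ^ (r / 2) := by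
  classical
  obtain ⟨t, ht⟩ := hre
  set s : ℕ := r / 2 with hs_def
  have hrs : r = 2 * s := by omega
  have hs1 : 1 ≤ s := by omega
  obtain ⟨B, hB, hBr⟩ := hrank
  have hbase_card : ∀ B', M.IsBase B' → B'.ncard = r := by
    intro B' hB'
    rw [Set.ncard_def, hB'.encard_eq_encard_of_isBase hB, ← Set.ncard_def, hBr]
  have hub : ∀ I, I ⊆ M.E → M.Indep I → I.ncard ≤ 2 * s := by
    intro I _ hIi
    obtain ⟨B', hB', hIB'⟩ := hIi.exists_isBase_superset
    have := Set.ncard_le_ncard hIB' (hfin.subset hB'.subset_ground)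
    have h2 := hbase_card B' hB'
    omega
  obtain ⟨P, hPX, hPdisj, hPcov, hPb⟩ := Matroid.core_partition hminor hfin s M.E subset_rfl
    ⟨B, hB.subset_ground, hB.indep, by rw [← hrs, hBr]⟩ (fun I h1 h2 => hub I h1 h2)
  have hPfin : ∀ j, (P j).Finite := fun j => hfin.subset (hPX j)
  have hBsetfin : {B' : Set α | M.IsBase B'}.Finite :=
    hfin.finite_subsets.subset (fun B' hB' => hB'.subset_ground)
  set 𝒜 : Finset (Set α) := hBsetfin.toFinset with h𝒜
  have hnum : M.numBases = 𝒜.card := by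
    rw [Matroid.numBases, Set.ncard_eq_toFinset_card _ hBsetfin]
  have hcov𝒜 : ∀ B' ∈ 𝒜, B' ⊆ ⋃ j, P j := by
    intro B' hB' b hb
    rw [Set.Finite.mem_toFinset] at hB'
    obtain ⟨j, hj⟩ := hPcov b (hB'.subset_ground hb)
      (hB'.indep.subset (Set.singleton_subset_iff.2 hb))
    exact Set.mem_iUnion.2 ⟨j, hj⟩
  have htr : ∀ B' ∈ 𝒜, ∀ j, (B' ∩ P j).ncard = 2 := by
    intro B' hB'mem j
    have hB'cov := hcov𝒜 B' hB'mem
    rw [Set.Finite.mem_toFinset] at hB'mem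
    have hle : ∀ k, (B' ∩ P k).ncard ≤ 2 := fun k =>
      hPb k _ Set.inter_subset_right (hB'mem.indep.subset Set.inter_subset_left)
    have hgesum : 2 * s ≤ ∑ k, (B' ∩ P k).ncard := by
      have hcv : B' ⊆ ⋃ k, (B' ∩ P k) := by
        intro b hb
        obtain ⟨k, hk⟩ := Set.mem_iUnion.1 (hB'cov hb)
        exact Set.mem_iUnion.2 ⟨k, hb, hk⟩
      have h1 : B'.ncard ≤ ∑ k, (B' ∩ P k).ncard := Matroid.ncard_le_sum_cover s
        (fun k => B' ∩ P k) (fun k => (hPfin k).subset Set.inter_subset_right) B' hcv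
      have h2 := hbase_card B' hB'mem
      omega
    by_contra hne
    have hlt : (B' ∩ P j).ncard ≤ 1 := by have := hle j; omega
    have hsum2 : ∑ k, (B' ∩ P k).ncard ≤ 1 + 2 * (s - 1) := by
      have he : ∑ k, (B' ∩ P k).ncard
          = (B' ∩ P j).ncard + ∑ k ∈ Finset.univ.erase j, (B' ∩ P k).ncard :=
        (Finset.add_sum_erase Finset.univ _ (Finset.mem_univ j)).symm
      have hrest : ∑ k ∈ Finset.univ.erase j, (B' ∩ P k).ncard ≤ (s - 1) * 2 := by
        have h3 := Finset.sum_le_card_nsmul (Finset.univ.erase j) (fun k => (B' ∩ P k).ncard) 2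
          (fun k _ => hle k)
        rwa [Finset.card_erase_of_mem (Finset.mem_univ j), Finset.card_univ, Fintype.card_fin,
          smul_eq_mul] at h3
      omega
    omega
  have hcount : 𝒜.card ≤ ∏ j, ((P j).ncard.choose 2) :=
    Matroid.count_le s P hPfin hPdisj 𝒜 hcov𝒜 htr
  have hB𝒜 : B ∈ 𝒜 := (Set.Finite.mem_toFinset hBsetfin).2 hB
  have hm2 : ∀ j, 2 ≤ (P j).ncard := fun j => by
    have h := htr B hB𝒜 j
    have h2 := Set.ncard_le_ncard (Set.inter_subset_right : B ∩ P j ⊆ P j) (hPfin j)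
    omega
  have hsumle : ∑ j, (P j).ncard ≤ n := by
    rw [← hn]
    exact Matroid.sum_ncard_le_of_disjoint s P M.E hPX hPdisj hfin
  -- real arithmetic
  have hs0 : (s : ℝ) ≠ 0 := by
    have : (0:ℝ) < s := by exact_mod_cast hs1
    exact ne_of_gt this
  have hsRpos : (0:ℝ) < s := by exact_mod_cast hs1
  have hm1 : ∀ j, (1:ℝ) ≤ ((P j).ncard : ℝ) := fun j => by
    have h := hm2 j
    have h1 : 1 ≤ (P j).ncard := by omega
    exact_mod_cast h1
  have hmnn : ∀ j, (0:ℝ) ≤ ((P j).ncard : ℝ) := fun j => by positivity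
  have step1 : (M.numBases : ℝ) ≤ ∏ j, (((P j).ncard.choose 2 : ℕ) : ℝ) := by
    rw [hnum]
    exact_mod_cast hcount
  have step2 : ∏ j, (((P j).ncard.choose 2 : ℕ) : ℝ)
      = ∏ j, (((P j).ncard : ℝ) * (((P j).ncard : ℝ) - 1) / 2) :=
    Finset.prod_congr rfl fun j _ => by rw [Nat.cast_choose_two]
  have hprodsplit : ∏ j, (((P j).ncard : ℝ) * (((P j).ncard : ℝ) - 1) / 2)
      = (∏ j, ((P j).ncard : ℝ)) * ((∏ j, (((P j).ncard : ℝ) - 1)) * (2⁻¹:ℝ)^s) := by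
    calc ∏ j, (((P j).ncard : ℝ) * (((P j).ncard : ℝ) - 1) / 2)
        = ∏ j, (((P j).ncard : ℝ) * ((((P j).ncard : ℝ) - 1) * (2⁻¹:ℝ))) :=
          Finset.prod_congr rfl fun j _ => by ring
      _ = (∏ j, ((P j).ncard : ℝ)) * (∏ j, ((((P j).ncard : ℝ) - 1) * (2⁻¹:ℝ))) :=
          Finset.prod_mul_distrib
      _ = (∏ j, ((P j).ncard : ℝ)) * ((∏ j, (((P j).ncard : ℝ) - 1)) * ∏ _j : Fin s, (2⁻¹:ℝ)) :=
          by rw [Finset.prod_mul_distrib]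
      _ = (∏ j, ((P j).ncard : ℝ)) * ((∏ j, (((P j).ncard : ℝ) - 1)) * (2⁻¹:ℝ)^s) := by
          rw [Finset.prod_const, Finset.card_univ, Fintype.card_fin]
  have hsumR : ∑ j, ((P j).ncard : ℝ) ≤ (n:ℝ) := by
    have h := hsumle
    push_cast
    exact_mod_cast h
  have hA : ∏ j, ((P j).ncard : ℝ) ≤ ((n:ℝ)/s)^s := by
    refine (Matroid.amgm (by omega) _ hmnn).trans ?_
    refine pow_le_pow_left₀ (by positivity) ?_ s
    exact div_le_div_of_nonneg_right hsumR hsRpos.le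
  have hsum1 : ∑ j, (((P j).ncard : ℝ) - 1) = (∑ j, ((P j).ncard : ℝ)) - s := by
    rw [Finset.sum_sub_distrib, Finset.sum_const, Finset.card_univ, Fintype.card_fin,
      nsmul_eq_mul, mul_one]
  have hB2 : ∏ j, (((P j).ncard : ℝ) - 1) ≤ ((n:ℝ)/s - 1)^s := by
    refine (Matroid.amgm (by omega) _ (fun j => by linarith [hm1 j])).trans ?_
    refine pow_le_pow_left₀ ?_ ?_ s
    · refine div_nonneg (Finset.sum_nonneg fun j _ => by linarith [hm1 j]) hsRpos.le
    · rw [hsum1, sub_div, div_self hs0]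
      have := div_le_div_of_nonneg_right hsumR hsRpos.le
      linarith
  have hfinalle : (∏ j, ((P j).ncard : ℝ)) * ((∏ j, (((P j).ncard : ℝ) - 1)) * (2⁻¹:ℝ)^s)
      ≤ ((n:ℝ)/s)^s * (((n:ℝ)/s - 1)^s * (2⁻¹:ℝ)^s) := by
    refine mul_le_mul hA ?_ ?_ (by positivity)
    · exact mul_le_mul_of_nonneg_right hB2 (by positivity)
    · exact mul_nonneg (Finset.prod_nonneg fun j _ => by linarith [hm1 j]) (by positivity)
  have hgoalrw : ((2 * (n : ℝ) / (r : ℝ)) * (2 * (n : ℝ) / (r : ℝ) - 1) / 2) ^ (r / 2)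
      = ((n:ℝ)/s)^s * (((n:ℝ)/s - 1)^s * (2⁻¹:ℝ)^s) := by
    have hrR : (r:ℝ) = 2 * s := by exact_mod_cast hrs
    have h2n : 2 * (n : ℝ) / (r : ℝ) = (n:ℝ)/s := by
      rw [hrR]
      field_simp
    rw [show r / 2 = s from rfl, h2n, ← mul_pow, ← mul_pow]
    congr 1
    ring
  calc (M.numBases : ℝ) ≤ ∏ j, (((P j).ncard.choose 2 : ℕ) : ℝ) := step1
    _ = ∏ j, (((P j).ncard : ℝ) * (((P j).ncard : ℝ) - 1) / 2) := step2
    _ = (∏ j, ((P j).ncard : ℝ)) * ((∏ j, (((P j).ncard : ℝ) - 1)) * (2⁻¹:ℝ)^s) := hprodsplit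
    _ ≤ ((n:ℝ)/s)^s * (((n:ℝ)/s - 1)^s * (2⁻¹:ℝ)^s) := hfinalle
    _ = ((2 * (n : ℝ) / (r : ℝ)) * (2 * (n : ℝ) / (r : ℝ) - 1) / 2) ^ (r / 2) := hgoalrw.symm
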